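/- Let G be a C¹ flow on ℝ³, t* > 0, and τ a continuously differentiable real-valued function on an open neighborhood N of e₃ in ℝ³ with τ(e₃) = t*, such that G(τ(y), y) ∈ M_I for every y ∈ N ∩ M_E. Set x = G(t*, e₃) and assume x ∈ M_I ∩ L, ∂₁G(0, e₃) ∉ L, and ∂₁G(0, x) ∉ ℝx^⊥ ⊕ ℝe₃, where x^⊥ = (−x₂, x₁, 0). Then the Fréchet derivative at e₃ of the map E : N → ℝ³, E(y) = G(τ(y), y), restricted to L, is a linear isomorphism from L onto ℝx^⊥ ⊕ ℝe₃. -/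

import Mathlib

noncomputable section
open Real Set

abbrev R3 := EuclideanSpace ℝ (Fin 3)

/-- Orthogonal projection onto `L = ℝe₁ ⊕ ℝe₂`. -/
def PL (x : R3) : R3 := WithLp.toLp 2 (fun i => if (i : ℕ) = 2 then 0 else x i)

/-- Orthogonal projection onto `U = ℝe₃`. -/
def PU (x : R3) : R3 := WithLp.toLp 2 (fun i => if (i : ℕ) = 2 then x i else 0)

/-- The plane `L = ℝe₁ ⊕ ℝe₂`. -/
def Lset : Set R3 := {x | x 2 = 0}

/-- The line `U = ℝe₃`. -/
def Uset : Set R3 := {x | x 0 = 0 ∧ x 1 = 0}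

/-- `B₁ = {x : |P_L x| ≤ 1, |P_U x| ≤ 1}`. -/
def B1 : Set R3 := {x | ‖PL x‖ ≤ 1 ∧ ‖PU x‖ ≤ 1}

/-- The linearized flow `T(t)`. -/
def Tmap (σ μ u t : ℝ) (x : R3) : R3 := WithLp.toLp 2 fun i =>
  if (i : ℕ) = 0 then exp (σ * t) * (cos (μ * t) * x 0 + sin (μ * t) * x 1)
  else if (i : ℕ) = 1 then exp (σ * t) * (-(sin (μ * t)) * x 0 + cos (μ * t) * x 1)
  else exp (u * t) * x 2

/-- A C¹ flow on ℝ³. -/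
def IsC1Flow (G : ℝ → R3 → R3) : Prop :=
  ContDiff ℝ 1 (fun p : ℝ × R3 => G p.1 p.2) ∧ (∀ x, G 0 x = x) ∧
    ∀ s t x, G (t + s) x = G t (G s x)

/-- `M` is invariant under the flow `G` in the set `N`. -/
def InvariantIn (G : ℝ → R3 → R3) (M N : Set R3) : Prop :=
  ∀ x ∈ M ∩ N, ∀ I : Set ℝ, (0 : ℝ) ∈ I → I.OrdConnected →
    (∀ t ∈ I, G t x ∈ N) → ∀ t ∈ I, G t x ∈ M

/-- The third basis vector `e₃`. -/
def e3 : R3 := WithLp.toLp 2 (fun i => if (i : ℕ) = 2 then 1 else 0)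

/-- For `x` in the plane `L`, the rotation `x^⊥ = (-x₂, x₁, 0)`. -/
def perpv (w : R3) : R3 := WithLp.toLp 2 fun i =>
  if (i : ℕ) = 0 then -(w 1) else if (i : ℕ) = 1 then w 0 else 0


lemma r3_ext {z w : R3} (h0 : z 0 = w 0) (h1 : z 1 = w 1) (h2 : z 2 = w 2) : z = w := by
  ext i; fin_cases i <;> assumption

lemma norm_PL_sq (z : R3) : ‖PL z‖ ^ 2 = z 0 ^ 2 + z 1 ^ 2 := by
  rw [EuclideanSpace.norm_eq, Real.sq_sqrt (by positivity)]
  simp [Fin.sum_univ_three, PL, sq_abs]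

theorem statement9
    (G : ℝ → R3 → R3) (hG : IsC1Flow G)
    (tstar : ℝ) (htstar : 0 < tstar)
    (N : Set R3) (hN : IsOpen N) (he3N : e3 ∈ N)
    (τ : R3 → ℝ) (hτ : ContDiffOn ℝ 1 τ N) (hτe3 : τ e3 = tstar)
    (hMI : ∀ y ∈ N, y - e3 ∈ Lset → ‖PL (G (τ y) y)‖ = 1)
    (hxMI : ‖PL (G tstar e3)‖ = 1) (hxL : G tstar e3 ∈ Lset)
    (htransE : deriv (fun s => G s e3) 0 ∉ Lset)
    (htransI : deriv (fun s => G s (G tstar e3)) 0 ∉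
      {y : R3 | ∃ a b : ℝ, y = a • perpv (G tstar e3) + b • e3}) :
    (fun v => fderiv ℝ (fun y => G (τ y) y) e3 v) '' Lset =
      {y : R3 | ∃ a b : ℝ, y = a • perpv (G tstar e3) + b • e3} ∧
    Set.InjOn (fun v => fderiv ℝ (fun y => G (τ y) y) e3 v) Lset := by
  obtain ⟨hGc, hG0, hGlaw⟩ := hG
  set x := G tstar e3 with hxdef
  set f : ℝ × R3 → R3 := fun p => G p.1 p.2 with hfdef
  have hfd : Differentiable ℝ f := hGc.differentiable one_ne_zero
  have hDt : ∀ (t : ℝ) (y : R3), HasDerivAt (fun s => G s y) (fderiv ℝ f (t, y) (1, 0)) t := by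
    intro t y
    exact (hfd (t, y)).hasFDerivAt.comp_hasDerivAt t
      (HasDerivAt.prodMk (hasDerivAt_id t) (hasDerivAt_const t y))
  set Z : R3 →L[ℝ] ℝ × R3 := (0 : R3 →L[ℝ] ℝ).prod (ContinuousLinearMap.id ℝ R3) with hZ
  have hDy : ∀ (t : ℝ) (y : R3), HasFDerivAt (fun z => G t z)
      ((fderiv ℝ f (t, y)).comp Z) y := by
    intro t y
    exact (hfd (t, y)).hasFDerivAt.comp y
      (HasFDerivAt.prodMk (hasFDerivAt_const t y) (hasFDerivAt_id y))
  set A := fderiv ℝ f (tstar, e3) with hA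
  set Dy2 : R3 →L[ℝ] R3 := A.comp Z with hDy2
  -- τ differentiable, derivative of E
  have hτd : DifferentiableAt ℝ τ e3 :=
    ((hτ.differentiableOn one_ne_zero) e3 he3N).differentiableAt (hN.mem_nhds he3N)
  set Dτ := fderiv ℝ τ e3 with hDτ
  set DE : R3 →L[ℝ] R3 := A.comp (Dτ.prod (ContinuousLinearMap.id ℝ R3)) with hDE
  have hE : HasFDerivAt (fun y => G (τ y) y) DE e3 := by
    have h2 : HasFDerivAt f A (τ e3, e3) := by rw [hτe3]; exact (hfd _).hasFDerivAt
    have h1 : HasFDerivAt (fun y : R3 => (τ y, y)) (Dτ.prod (ContinuousLinearMap.id ℝ R3)) e3 :=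
      HasFDerivAt.prodMk hτd.hasFDerivAt (hasFDerivAt_id e3)
    exact HasFDerivAt.comp (g := f) (f := fun y : R3 => (τ y, y)) e3 h2 h1
  have hfderivE : fderiv ℝ (fun y => G (τ y) y) e3 = DE := hE.fderiv
  -- velocity vectors
  set ve := fderiv ℝ f (0, e3) (1, (0 : R3)) with hve
  set vx := fderiv ℝ f (0, x) (1, (0 : R3)) with hvx
  have hveD : HasDerivAt (fun s => G s e3) ve 0 := hDt 0 e3
  have hvxD : HasDerivAt (fun s => G s x) vx 0 := hDt 0 x
  have hve2 : ve 2 ≠ 0 := by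
    intro h
    exact htransE (by rw [hveD.deriv]; exact h)
  -- A (1,0) = vx
  have hAvx : A (1, (0 : R3)) = vx := by
    have heq : (fun t => G (t + tstar) e3) = fun t => G t x :=
      funext fun t => hGlaw tstar t e3
    have h0 : HasDerivAt (fun s => G s e3) (A (1, (0 : R3))) ((fun t : ℝ => t + tstar) 0) := by
      simp only [zero_add]; exact hDt tstar e3
    have h1 : HasDerivAt (fun t => G (t + tstar) e3) (A (1, (0 : R3))) 0 := by
      have := h0.scomp 0 ((hasDerivAt_id (0:ℝ)).add_const tstar)
      rw [one_smul] at this; exact this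
    have h2 : HasDerivAt (fun t => G t x) (A (1, (0 : R3))) 0 := heq ▸ h1
    exact h2.unique hvxD
  -- Dy2 ve = vx
  have hDyve : Dy2 ve = vx := by
    have heq2 : (fun s => G tstar (G s e3)) = fun s => G s x := by
      funext s
      rw [← hGlaw s tstar e3, add_comm, hGlaw tstar s e3, ← hxdef]
    have houter : HasFDerivAt (fun z => G tstar z) Dy2 (G 0 e3) := by
      rw [hG0]; exact hDy tstar e3
    have h3 : HasDerivAt (fun s => G tstar (G s e3)) (Dy2 ve) 0 :=
      houter.comp_hasDerivAt 0 hveD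
    have h4 : HasDerivAt (fun s => G s x) (Dy2 ve) 0 := heq2 ▸ h3
    exact h4.unique hvxD
  -- Dy2 is injective (left inverse C)
  set C : R3 →L[ℝ] R3 := (fderiv ℝ f (-tstar, x)).comp Z with hC
  have hCid : ∀ v : R3, C (Dy2 v) = v := by
    have houter : HasFDerivAt (fun z => G (-tstar) z) C x := hDy (-tstar) x
    have hcomp : HasFDerivAt (fun y => G (-tstar) (G tstar y)) (C.comp Dy2) e3 :=
      HasFDerivAt.comp (g := fun z => G (-tstar) z) (f := fun z => G tstar z) e3 houter (hDy tstar e3)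
    have heqid : (fun y : R3 => G (-tstar) (G tstar y)) = fun y => y := by
      funext y
      rw [← hGlaw tstar (-tstar) y, neg_add_cancel, hG0]
    rw [heqid] at hcomp
    have : C.comp Dy2 = ContinuousLinearMap.id ℝ R3 := hcomp.unique (hasFDerivAt_id e3)
    intro v
    exact DFunLike.congr_fun this v
  -- the constraint: image of L lands in the tangent plane of the cylinder
  have hconstr : ∀ v : R3, v 2 = 0 → x 0 * DE v 0 + x 1 * DE v 1 = 0 := by
    intro v hv
    have hpath : HasDerivAt (fun s : ℝ => e3 + s • v) v 0 := by
      simpa using ((hasDerivAt_id (0:ℝ)).smul_const v).const_add e3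
    have hEc : HasFDerivAt (fun y => G (τ y) y) DE ((fun s : ℝ => e3 + s • v) 0) := by
      simpa using hE
    have hc : HasDerivAt (fun s : ℝ => G (τ (e3 + s • v)) (e3 + s • v)) (DE v) 0 :=
      by have := hEc.comp_hasDerivAt 0 hpath; exact this
    have hci : ∀ i : Fin 3,
        HasDerivAt (fun s : ℝ => (G (τ (e3 + s • v)) (e3 + s • v)) i) (DE v i) 0 := by
      intro i
      have := (EuclideanSpace.proj i).hasFDerivAt.comp_hasDerivAt 0 hc; exact this
    have hsum := ((hci 0).pow 2).add ((hci 1).pow 2)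
    have hev : (fun s : ℝ => (G (τ (e3 + s • v)) (e3 + s • v)) 0 ^ 2
        + (G (τ (e3 + s • v)) (e3 + s • v)) 1 ^ 2) =ᶠ[nhds (0:ℝ)] fun _ => 1 := by
      have hNmem : N ∈ nhds (e3 + (0:ℝ) • v) := by simpa using hN.mem_nhds he3N
      have hmem : ∀ᶠ s in nhds (0:ℝ), e3 + s • v ∈ N :=
        hpath.continuousAt.preimage_mem_nhds hNmem
      filter_upwards [hmem] with s hs
      have hL : (e3 + s • v) - e3 ∈ Lset := by
        show ((e3 + s • v) - e3) 2 = 0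
        simp [hv]
      have h1 := hMI _ hs hL
      have h2 := norm_PL_sq (G (τ (e3 + s • v)) (e3 + s • v))
      rw [h1] at h2
      simpa using h2.symm
    have hval : (G (τ (e3 + (0:ℝ) • v)) (e3 + (0:ℝ) • v)) = x := by
      simp [hτe3, hxdef]
    have hzero : (2:ℕ) * (G (τ (e3 + (0:ℝ) • v)) (e3 + (0:ℝ) • v)) 0 ^ (2-1) * DE v 0
        + (2:ℕ) * (G (τ (e3 + (0:ℝ) • v)) (e3 + (0:ℝ) • v)) 1 ^ (2-1) * DE v 1 = 0 := by
      rw [← hsum.deriv, show ((fun s : ℝ => (G (τ (e3 + s • v)) (e3 + s • v)) 0) ^ 2 + (fun s : ℝ => (G (τ (e3 + s • v)) (e3 + s • v)) 1) ^ 2) = (fun s : ℝ => (G (τ (e3 + s • v)) (e3 + s • v)) 0 ^ 2 + (G (τ (e3 + s • v)) (e3 + s • v)) 1 ^ 2) from rfl, hev.deriv_eq]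
      simp
    rw [hval] at hzero
    norm_num at hzero
    linarith
  -- kernel of DE on L is trivial
  have hK : ∀ v : R3, v 2 = 0 → DE v = 0 → v = 0 := by
    intro v hv h0
    have hsplit : DE v = Dy2 (Dτ v • ve + v) := by
      have h1 : (Dτ v, v) = Dτ v • ((1:ℝ), (0:R3)) + ((0:ℝ), v) := by
        simp [Prod.ext_iff]
      calc DE v = A (Dτ v, v) := by
            simp [hDE, ContinuousLinearMap.comp_apply, ContinuousLinearMap.prod_apply]
        _ = Dτ v • A (1, (0:R3)) + A ((0:ℝ), v) := by rw [h1, map_add, map_smul]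
        _ = Dτ v • Dy2 ve + Dy2 v := by
            rw [hAvx, ← hDyve]
            congr 1
        _ = Dy2 (Dτ v • ve + v) := by rw [map_add, map_smul]
    have hw : Dτ v • ve + v = 0 := by
      have h2 := hCid (Dτ v • ve + v)
      rw [← hsplit, h0, map_zero] at h2
      exact h2.symm
    have h2 : Dτ v * ve 2 + v 2 = 0 := by
      have h3 := congrArg (fun z : R3 => z 2) hw
      simpa using h3
    have hτv : Dτ v = 0 := by
      rw [hv, add_zero] at h2
      exact (mul_eq_zero.mp h2).resolve_right hve2
    have h4 := hw
    rw [hτv, zero_smul, zero_add] at h4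
    exact h4
  -- algebra
  have hx2 : x 2 = 0 := hxL
  have hx01 : x 0 ^ 2 + x 1 ^ 2 = 1 := by
    rw [← norm_PL_sq, hxMI]; norm_num
  set p : R3 := perpv x with hp
  have hS : ∀ y : R3, (∃ a b : ℝ, y = a • p + b • e3) ↔ x 0 * y 0 + x 1 * y 1 = 0 := by
    intro y
    constructor
    · rintro ⟨a, b, rfl⟩
      simp [hp, perpv, e3, PiLp.add_apply, PiLp.smul_apply, smul_eq_mul]
      ring
    · intro h
      refine ⟨-(x 1) * y 0 + x 0 * y 1, y 2, ?_⟩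
      refine r3_ext ?_ ?_ ?_ <;>
        simp [hp, perpv, e3, PiLp.add_apply, PiLp.smul_apply, smul_eq_mul]
      · linear_combination (-(y 0)) * hx01 + x 0 * h
      · linear_combination (-(y 1)) * hx01 + x 1 * h
  set e1v : R3 := EuclideanSpace.single 0 1 with he1
  set e2v : R3 := EuclideanSpace.single 1 1 with he2
  have he1L : e1v 2 = 0 := by simp [he1, EuclideanSpace.single_apply]
  have he2L : e2v 2 = 0 := by simp [he2, EuclideanSpace.single_apply]
  obtain ⟨a1, b1, hw1⟩ := (hS (DE e1v)).mpr (hconstr e1v he1L)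
  obtain ⟨a2, b2, hw2⟩ := (hS (DE e2v)).mpr (hconstr e2v he2L)
  have comb : ∀ c1 c2 : ℝ, c1 • DE e1v + c2 • DE e2v = 0 → c1 = 0 ∧ c2 = 0 := by
    intro c1 c2 hc
    have hvL : (c1 • e1v + c2 • e2v : R3) 2 = 0 := by
      simp [he1, he2, EuclideanSpace.single_apply, PiLp.add_apply, PiLp.smul_apply]
    have hDE0 : DE (c1 • e1v + c2 • e2v) = 0 := by
      rw [map_add, map_smul, map_smul]; exact hc
    have h0 := hK _ hvL hDE0
    constructor
    · have h1 := congrArg (fun z : R3 => z 0) h0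
      simpa [he1, he2, EuclideanSpace.single_apply, PiLp.add_apply, PiLp.smul_apply] using h1
    · have h1 := congrArg (fun z : R3 => z 1) h0
      simpa [he1, he2, EuclideanSpace.single_apply, PiLp.add_apply, PiLp.smul_apply] using h1
  have hdet : a1 * b2 - a2 * b1 ≠ 0 := by
    intro hd
    have e0 : a2 • DE e1v + (-a1) • DE e2v = 0 := by
      rw [hw1, hw2]
      have hmod : a2 • (a1 • p + b1 • e3) + (-a1) • (a2 • p + b2 • e3)
          = (a2 * b1 - a1 * b2) • e3 := by module
      rw [hmod, show a2 * b1 - a1 * b2 = 0 by linarith, zero_smul]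
    obtain ⟨ha2, ha1n⟩ := comb _ _ e0
    have ha1 : a1 = 0 := by linarith
    rw [ha1, zero_smul, zero_add] at hw1
    rw [ha2, zero_smul, zero_add] at hw2
    have e1 : b2 • DE e1v + (-b1) • DE e2v = 0 := by
      rw [hw1, hw2]; module
    obtain ⟨hb2, hb1n⟩ := comb _ _ e1
    have hb1 : b1 = 0 := by linarith
    rw [hb1, zero_smul] at hw1
    have h0 := hK e1v he1L hw1
    have h1 := congrArg (fun z : R3 => z 0) h0
    simp [he1, EuclideanSpace.single_apply] at h1
  simp only [hfderivE]
  constructor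
  · ext z
    simp only [Set.mem_image, Set.mem_setOf_eq]
    constructor
    · rintro ⟨v, hv, rfl⟩
      exact (hS _).mpr (hconstr v hv)
    · rintro ⟨α, β, rfl⟩
      refine ⟨((α * b2 - β * a2) / (a1 * b2 - a2 * b1)) • e1v
        + ((a1 * β - b1 * α) / (a1 * b2 - a2 * b1)) • e2v, ?_, ?_⟩
      · show (((α * b2 - β * a2) / (a1 * b2 - a2 * b1)) • e1v
          + ((a1 * β - b1 * α) / (a1 * b2 - a2 * b1)) • e2v : R3) 2 = 0
        simp [he1, he2, EuclideanSpace.single_apply, PiLp.add_apply, PiLp.smul_apply]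
      · show DE _ = _
        rw [map_add, map_smul, map_smul, hw1, hw2]
        have hmod : ∀ c1 c2 : ℝ, c1 • (a1 • p + b1 • e3) + c2 • (a2 • p + b2 • e3)
            = (c1 * a1 + c2 * a2) • p + (c1 * b1 + c2 * b2) • e3 := by intros; module
        rw [hmod]
        have hc1 : (α * b2 - β * a2) / (a1 * b2 - a2 * b1) * a1
            + (a1 * β - b1 * α) / (a1 * b2 - a2 * b1) * a2 = α := by
          rw [div_mul_eq_mul_div, div_mul_eq_mul_div, ← add_div, div_eq_iff hdet]
          ring
        have hc2 : (α * b2 - β * a2) / (a1 * b2 - a2 * b1) * b1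
            + (a1 * β - b1 * α) / (a1 * b2 - a2 * b1) * b2 = β := by
          rw [div_mul_eq_mul_div, div_mul_eq_mul_div, ← add_div, div_eq_iff hdet]
          ring
        rw [hc1, hc2]
  · intro v hv w hw hvw
    have hv2 : v 2 = 0 := hv
    have hw2' : w 2 = 0 := hw
    have hvw' : DE v = DE w := hvw
    have hsub : DE (v - w) = 0 := by rw [map_sub, hvw', sub_self]
    have h0 := hK (v - w) (by simp [hv2, hw2']) hsub
    exact sub_eq_zero.mp h0
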